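/- Let N ≥ 2, ω = exp(2πi/N), ω^(1/2) = exp(πi/N), ω^(1/4) = exp(πi/(2N)). Suppose k, k' ∈ ℂ satisfy k² + k'² = 1 and the quadruple (a,b,c,d) ∈ ℂ⁴ lies on 𝔚_{k',k}. Then: (i) the quadruples (ω^(1/2)d, c, b, ω^(1/2)a), (b, ωa, d, c) and (ωa, b, c, d) all lie on 𝔚_{k',k}; (ii) the quadruple (ω^(−1/2)a, d, c, b) lies on 𝔚_{k,k'}; (iii) if k' ≠ 0, then (1/k')² + (ik/k')² = 1 and the quadruple (ω^(1/4)a, ω^(1/4)b, d, c) lies on 𝔚_{1/k', ik/k'}. -/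

import Mathlib

/-- `(a,b,c,d)` lies on the rapidity curve `𝔚_{k',k}`:
`k·a^N + k'·c^N = d^N`, `k·b^N + k'·d^N = c^N`, `a^N + k'·b^N = k·d^N`,
`k'·a^N + b^N = k·c^N`. -/
def OnW (N : ℕ) (k' k a b c d : ℂ) : Prop :=
  k * a ^ N + k' * c ^ N = d ^ N ∧
  k * b ^ N + k' * d ^ N = c ^ N ∧
  a ^ N + k' * b ^ N = k * d ^ N ∧
  k' * a ^ N + b ^ N = k * c ^ N

/-- The symmetries of the rapidity curves: with `ω = exp(2πi/N)`,
`ω^(1/2) = exp(πi/N)`, `ω^(1/4) = exp(πi/(2N))`, if `(a,b,c,d) ∈ 𝔚_{k',k}` then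
(i) `(ω^(1/2)d, c, b, ω^(1/2)a)`, `(b, ωa, d, c)`, `(ωa, b, c, d) ∈ 𝔚_{k',k}`;
(ii) `(ω^(-1/2)a, d, c, b) ∈ 𝔚_{k,k'}`;
(iii) if `k' ≠ 0` then `(1/k')² + (ik/k')² = 1` and
`(ω^(1/4)a, ω^(1/4)b, d, c) ∈ 𝔚_{1/k', ik/k'}`. -/
theorem rapidity_symmetries (N : ℕ) (hN : 2 ≤ N)
    (ω ωh ωq : ℂ)
    (hω : ω = Complex.exp (2 * Real.pi * Complex.I / N))
    (hωh : ωh = Complex.exp (Real.pi * Complex.I / N))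
    (hωq : ωq = Complex.exp (Real.pi * Complex.I / (2 * N)))
    (k k' : ℂ) (hkk : k ^ 2 + k' ^ 2 = 1)
    (a b c d : ℂ) (h : OnW N k' k a b c d) :
    OnW N k' k (ωh * d) c b (ωh * a) ∧
    OnW N k' k b (ω * a) d c ∧
    OnW N k' k (ω * a) b c d ∧
    OnW N k k' (ωh⁻¹ * a) d c b ∧
    (k' ≠ 0 →
      (1 / k') ^ 2 + (Complex.I * k / k') ^ 2 = 1 ∧
      OnW N (1 / k') (Complex.I * k / k') (ωq * a) (ωq * b) d c) := by
  obtain ⟨h1, h2, h3, h4⟩ := h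
  have hNne : (N : ℂ) ≠ 0 := Nat.cast_ne_zero.mpr (by omega)
  have hωN : ω ^ N = 1 := by
    rw [hω, ← Complex.exp_nat_mul,
      show (N : ℂ) * (2 * Real.pi * Complex.I / N) = 2 * Real.pi * Complex.I by
        field_simp]
    simpa using Complex.exp_int_mul_two_pi_mul_I 1
  have hωhN : ωh ^ N = -1 := by
    rw [hωh, ← Complex.exp_nat_mul,
      show (N : ℂ) * (Real.pi * Complex.I / N) = Real.pi * Complex.I by field_simp]
    exact Complex.exp_pi_mul_I
  have hωqN : ωq ^ N = Complex.I := by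
    rw [hωq, ← Complex.exp_nat_mul,
      show (N : ℂ) * (Real.pi * Complex.I / (2 * N)) = Real.pi / 2 * Complex.I by
        field_simp]
    simp [Complex.exp_mul_I]
  have hωhinv : ωh⁻¹ ^ N = -1 := by rw [inv_pow, hωhN]; norm_num
  refine ⟨⟨?_, ?_, ?_, ?_⟩, ⟨?_, ?_, ?_, ?_⟩, ⟨?_, ?_, ?_, ?_⟩, ⟨?_, ?_, ?_, ?_⟩, ?_⟩
  · rw [mul_pow, mul_pow, hωhN]; linear_combination h3
  · rw [mul_pow, hωhN]; linear_combination -h4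
  · rw [mul_pow, mul_pow, hωhN]; linear_combination h1
  · rw [mul_pow, hωhN]; linear_combination -h2
  · exact h2
  · rw [mul_pow, hωN]; linear_combination h1
  · rw [mul_pow, hωN]; linear_combination h4
  · rw [mul_pow, hωN]; linear_combination h3
  · rw [mul_pow, hωN]; linear_combination h1
  · exact h2
  · rw [mul_pow, hωN]; linear_combination h3
  · rw [mul_pow, hωN]; linear_combination h4
  · rw [mul_pow, hωhinv]; linear_combination -h4
  · linear_combination h2
  · rw [mul_pow, hωhinv]; linear_combination -h3
  · rw [mul_pow, hωhinv]; linear_combination -h1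
  · intro hk'
    refine ⟨by field_simp; linear_combination -hkk + k ^ 2 * Complex.I_sq, ?_, ?_, ?_, ?_⟩
    · rw [mul_pow, hωqN]; field_simp
      linear_combination -h1 + k * a ^ N * Complex.I_sq
    · rw [mul_pow, hωqN]; field_simp
      linear_combination -h2 + k * b ^ N * Complex.I_sq
    · rw [mul_pow, mul_pow, hωqN]; field_simp
      linear_combination h4
    · rw [mul_pow, mul_pow, hωqN]; field_simp
      linear_combination h3
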